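/- Reduction to a value: (1) if M →_v* V for some value V, then there exists a value V' such that M head-β_v-reduces (several steps) to V' and V' internal-v-reduces (several steps) to V; (2) M head-β_v-reduces (several steps) to a value V iff M head-v-reduces (several steps) to V. -/

import Mathlib

/-- Terms of the call-by-value λ-calculus, in de Bruijn notation. -/
inductive Term : Type
  | var : ℕ → Term
  | lam : Term → Term
  | app : Term → Term → Term

namespace Term

/-- Values are variables and abstractions. -/
def isValue : Term → Prop
  | var _ => True
  | lam _ => True
  | app _ _ => False

/-- Shift free de Bruijn indices ≥ d by one. -/
def lift (d : ℕ) : Term → Term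
  | var n => if n < d then var n else var (n+1)
  | lam M => lam (lift (d+1) M)
  | app M N => app (lift d M) (lift d N)

/-- Capture-avoiding substitution of `V` for index `k`. -/
def subst : Term → ℕ → Term → Term
  | var n, k, V => if n = k then V else if k < n then var (n-1) else var n
  | lam M, k, V => lam (subst M (k+1) (lift 0 V))
  | app M N, k, V => app (subst M k V) (subst N k V)

/-- Apply a term to a list of arguments: `appList M [M₁,…,Mₘ] = M M₁ … Mₘ`. -/
def appList : Term → List Term → Term
  | M, [] => M
  | M, N :: Ns => appList (app M N) Ns

/-- Root σ-reduction rules σ₁ and σ₃ (freshness handled by lifting). -/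
inductive SigmaBase : Term → Term → Prop
  | sigma1 (M N L : Term) :
      SigmaBase (app (app (lam M) N) L) (app (lam (app M (lift 0 L))) N)
  | sigma3 (V L N : Term) : isValue V →
      SigmaBase (app V (app (lam L) N)) (app (lam (app (lift 0 V) L)) N)

/-- Root rules of v-reduction: β_v, σ₁ and σ₃. -/
inductive VBase : Term → Term → Prop
  | beta (M V : Term) : isValue V → VBase (app (lam M) V) (subst M 0 V)
  | sigma1 (M N L : Term) :
      VBase (app (app (lam M) N) L) (app (lam (app M (lift 0 L))) N)
  | sigma3 (V L N : Term) : isValue V →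
      VBase (app V (app (lam L) N)) (app (lam (app (lift 0 V) L)) N)

/-- Contextual closure of a root relation. -/
inductive Ctx (r : Term → Term → Prop) : Term → Term → Prop
  | base {M M'} : r M M' → Ctx r M M'
  | lam {M M'} : Ctx r M M' → Ctx r (lam M) (lam M')
  | appL {M M'} (N : Term) : Ctx r M M' → Ctx r (app M N) (app M' N)
  | appR (M : Term) {N N'} : Ctx r N N' → Ctx r (app M N) (app M N')

/-- σ-reduction: contextual closure of σ₁ ∪ σ₃. -/
def SigmaRed : Term → Term → Prop := Ctx SigmaBase

/-- v-reduction: contextual closure of β_v ∪ σ₁ ∪ σ₃. -/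
def Red : Term → Term → Prop := Ctx VBase

/-- Head β_v-reduction. -/
inductive HeadBeta : Term → Term → Prop
  | beta (M V : Term) (Ms : List Term) : isValue V →
      HeadBeta (appList (app (lam M) V) Ms) (appList (subst M 0 V) Ms)
  | right (V : Term) {N N'} (Ms : List Term) : isValue V → HeadBeta N N' →
      HeadBeta (appList (app V N) Ms) (appList (app V N') Ms)

/-- Head σ-reduction. -/
inductive HeadSigma : Term → Term → Prop
  | sigma1 (M N L : Term) (Ms : List Term) :
      HeadSigma (appList (app (app (lam M) N) L) Ms)
                (appList (app (lam (app M (lift 0 L))) N) Ms)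
  | sigma3 (V L N : Term) (Ms : List Term) : isValue V →
      HeadSigma (appList (app V (app (lam L) N)) Ms)
                (appList (app (lam (app (lift 0 V) L)) N) Ms)
  | right (V : Term) {N N'} (Ms : List Term) : isValue V → HeadSigma N N' →
      HeadSigma (appList (app V N) Ms) (appList (app V N') Ms)

/-- Head v-reduction: head β_v ∪ head σ. -/
def HeadRed (M N : Term) : Prop := HeadBeta M N ∨ HeadSigma M N

/-- Internal v-reduction: v-steps that are not head v-steps. -/
def IntRed (M N : Term) : Prop := Red M N ∧ ¬ HeadRed M N

/-- Parallel reduction of the shuffling calculus λ_v^σ. -/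
inductive Par : Term → Term → Prop
  | var (x : ℕ) {Ms Ms' : List Term} : List.Forall₂ Par Ms Ms' →
      Par (appList (var x) Ms) (appList (var x) Ms')
  | lam {M M'} {Ms Ms' : List Term} : Par M M' → List.Forall₂ Par Ms Ms' →
      Par (appList (lam M) Ms) (appList (lam M') Ms')
  | beta {M M' V V'} {Ms Ms' : List Term} : isValue V → isValue V' →
      Par M M' → Par V V' → List.Forall₂ Par Ms Ms' →
      Par (appList (app (lam M) V) Ms) (appList (subst M' 0 V') Ms')
  | sigma1 {M M' N N' L L'} {Ms Ms' : List Term} :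
      Par M M' → Par N N' → Par L L' → List.Forall₂ Par Ms Ms' →
      Par (appList (app (app (lam M) N) L) Ms)
          (appList (app (lam (app M' (lift 0 L'))) N') Ms')
  | sigma3 {V V' L L' N N'} {Ms Ms' : List Term} : isValue V → isValue V' →
      Par V V' → Par L L' → Par N N' → List.Forall₂ Par Ms Ms' →
      Par (appList (app V (app (lam L) N)) Ms)
          (appList (app (lam (app (lift 0 V') L')) N') Ms')

/-- Internal parallel reduction. -/
inductive IPar : Term → Term → Prop
  | lam {N N'} : Par N N' → IPar (lam N) (lam N')
  | var (x : ℕ) : IPar (var x) (var x)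
  | right {V V' N N'} {Ms Ms' : List Term} : isValue V → isValue V' →
      Par V V' → IPar N N' → List.Forall₂ Par Ms Ms' →
      IPar (appList (app V N) Ms) (appList (app V' N') Ms')

/-- One-hole contexts. -/
inductive Ctx1 : Type
  | hole : Ctx1
  | lam : Ctx1 → Ctx1
  | appL : Ctx1 → Term → Ctx1
  | appR : Term → Ctx1 → Ctx1

/-- Capture-allowing hole filling. -/
def fill : Ctx1 → Term → Term
  | .hole, M => M
  | .lam C, M => lam (fill C M)
  | .appL C N, M => app (fill C M) N
  | .appR N C, M => app N (fill C M)

/-- `M` halts: head β_v-reduction from `M` reaches a value. -/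
def Halts (M : Term) : Prop := ∃ V, isValue V ∧ Relation.ReflTransGen HeadBeta M V

end Term
namespace Term

/-! ### Basic facts about values, appList, spines -/

theorem value_cases {V : Term} (h : isValue V) :
    (∃ x, V = var x) ∨ (∃ B, V = lam B) := by
  cases V with
  | var x => exact Or.inl ⟨x, rfl⟩
  | lam B => exact Or.inr ⟨B, rfl⟩
  | app A B => exact absurd h (by simp [isValue])

theorem not_value_app {A B : Term} (h : isValue (app A B)) : False := h

theorem lift_isValue {V : Term} (h : isValue V) (d : ℕ) : isValue (lift d V) := by
  rcases value_cases h with ⟨x, rfl⟩ | ⟨B, rfl⟩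
  · simp only [lift]; split <;> trivial
  · simp [lift, isValue]

theorem subst_isValue {V U : Term} (h : isValue V) (hU : isValue U) (k : ℕ) :
    isValue (subst V k U) := by
  rcases value_cases h with ⟨x, rfl⟩ | ⟨B, rfl⟩
  · simp only [subst]; split
    · exact hU
    · split <;> trivial
  · simp [subst, isValue]

theorem appList_append (M : Term) (Ns Ps : List Term) :
    appList M (Ns ++ Ps) = appList (appList M Ns) Ps := by
  induction Ns generalizing M with
  | nil => rfl
  | cons a tl ih => simp [appList, ih]

theorem appList_snoc (M : Term) (Ns : List Term) (N : Term) :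
    app (appList M Ns) N = appList M (Ns ++ [N]) := by
  rw [appList_append]; rfl

theorem appList_app_shape (Ms : List Term) (A B : Term) :
    ∃ A' B', appList (app A B) Ms = app A' B' := by
  induction Ms generalizing A B with
  | nil => exact ⟨A, B, rfl⟩
  | cons a tl ih => exact ih _ _

theorem not_value_appList_app {Ms : List Term} {A B : Term}
    (h : isValue (appList (app A B) Ms)) : False := by
  obtain ⟨A', B', hE⟩ := appList_app_shape Ms A B
  rw [hE] at h; exact h

/-- head of the application spine -/
def headOf : Term → Term
  | app M _ => headOf M
  | t => t

/-- arguments of the application spine -/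
def argsOf : Term → List Term
  | app M N => argsOf M ++ [N]
  | _ => []

@[simp] theorem headOf_app (M N : Term) : headOf (app M N) = headOf M := rfl
@[simp] theorem argsOf_app (M N : Term) : argsOf (app M N) = argsOf M ++ [N] := rfl

theorem headOf_appList (M : Term) (Ms : List Term) :
    headOf (appList M Ms) = headOf M := by
  induction Ms generalizing M with
  | nil => rfl
  | cons a tl ih => simp [appList, ih]

theorem argsOf_appList (M : Term) (Ms : List Term) :
    argsOf (appList M Ms) = argsOf M ++ Ms := by
  induction Ms generalizing M with
  | nil => simp [appList, argsOf]
  | cons a tl ih => simp [appList, ih]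

theorem headOf_value {V : Term} (h : isValue V) : headOf V = V := by
  rcases value_cases h with ⟨x, rfl⟩ | ⟨B, rfl⟩ <;> rfl

theorem argsOf_value {V : Term} (h : isValue V) : argsOf V = [] := by
  rcases value_cases h with ⟨x, rfl⟩ | ⟨B, rfl⟩ <;> rfl

theorem appList_value_inj {h h' : Term} {as as' : List Term}
    (hv : isValue h) (hv' : isValue h')
    (he : appList h as = appList h' as') : h = h' ∧ as = as' := by
  constructor
  · have := congrArg headOf he
    rwa [headOf_appList, headOf_appList, headOf_value hv, headOf_value hv'] at this
  · have := congrArg argsOf he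
    rwa [argsOf_appList, argsOf_appList, argsOf_value hv, argsOf_value hv',
      List.nil_append, List.nil_append] at this

/-- inversion against a σ₁-style source -/
theorem appList_sigma1_inj {h : Term} {as : List Term} {B N L : Term} {Ks : List Term}
    (hv : isValue h)
    (he : appList h as = appList (app (app (lam B) N) L) Ks) :
    h = lam B ∧ as = N :: L :: Ks := by
  constructor
  · have := congrArg headOf he
    rwa [headOf_appList, headOf_appList, headOf_value hv] at this
  · have := congrArg argsOf he
    rw [argsOf_appList, argsOf_appList, argsOf_value hv, List.nil_append] at this
    simpa [argsOf] using this

theorem value_eq_appList_app {V : Term} {A B : Term} {Ms : List Term}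
    (hv : isValue V) (he : V = appList (app A B) Ms) : False := by
  rw [he] at hv; exact not_value_appList_app hv

/-! ### de Bruijn lemmas -/

theorem lift_lift (M : Term) : ∀ d e, d ≤ e →
    lift d (lift e M) = lift (e+1) (lift d M) := by
  induction M with
  | var n =>
      intro d e hde
      simp only [lift]
      repeat' (first | (split_ifs <;> simp only [lift, subst]) | split_ifs | simp only [lift, subst])
      all_goals first | rfl | (exfalso; omega) | (congr 1; omega)
  | lam M ih => intro d e hde; simp only [lift]; rw [ih (d+1) (e+1) (by omega)]
  | app M N ihM ihN => intro d e hde; simp only [lift]; rw [ihM _ _ hde, ihN _ _ hde]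

theorem subst_lift_self (M : Term) : ∀ k (V : Term), subst (lift k M) k V = M := by
  induction M with
  | var n =>
      intro k V
      simp only [lift]
      repeat' (first | (split_ifs <;> simp only [lift, subst]) | split_ifs | simp only [lift, subst])
      all_goals first | rfl | (exfalso; omega) | (congr 1; omega)
  | lam M ih => intro k V; simp only [lift, subst]; rw [ih]
  | app M N ihM ihN => intro k V; simp only [lift, subst]; rw [ihM, ihN]

theorem lift_subst_le (M : Term) : ∀ k d (V : Term), d ≤ k →
    lift d (subst M k V) = subst (lift d M) (k+1) (lift d V) := by
  induction M with
  | var n =>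
      intro k d V hdk
      simp only [subst, lift]
      repeat' (first | (split_ifs <;> simp only [lift, subst]) | split_ifs | simp only [lift, subst])
      all_goals first | rfl | (exfalso; omega) | (congr 1; omega)
  | lam M ih =>
      intro k d V hdk
      simp only [subst, lift]
      rw [ih (k+1) (d+1) _ (by omega), lift_lift V 0 d (by omega)]
  | app M N ihM ihN =>
      intro k d V hdk
      simp only [subst, lift]
      rw [ihM _ _ _ hdk, ihN _ _ _ hdk]

theorem lift_subst_ge (M : Term) : ∀ k d (V : Term), k ≤ d →
    lift d (subst M k V) = subst (lift (d+1) M) k (lift d V) := by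
  induction M with
  | var n =>
      intro k d V hkd
      simp only [subst, lift]
      repeat' (first | (split_ifs <;> simp only [lift, subst]) | split_ifs | simp only [lift, subst])
      all_goals first | rfl | (exfalso; omega) | (congr 1; omega)
  | lam M ih =>
      intro k d V hkd
      simp only [subst, lift]
      rw [ih (k+1) (d+1) _ (by omega), lift_lift V 0 d (by omega)]
  | app M N ihM ihN =>
      intro k d V hkd
      simp only [subst, lift]
      rw [ihM _ _ _ hkd, ihN _ _ _ hkd]

theorem subst_subst (M : Term) : ∀ j k (W V : Term), j ≤ k →
    subst (subst M j W) k V = subst (subst M (k+1) (lift j V)) j (subst W k V) := by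
  induction M with
  | var n =>
      intro j k W V hjk
      simp only [subst]
      repeat' (first | (split_ifs <;> simp only [lift, subst]) | split_ifs | simp only [lift, subst])
      all_goals try first | rfl | (rw [subst_lift_self]) | (exfalso; omega) | (congr 1; omega)
      all_goals try (exfalso; omega)
  | lam M ih =>
      intro j k W V hjk
      simp only [subst]
      rw [ih (j+1) (k+1) _ _ (by omega), lift_lift V 0 j (by omega),
        lift_subst_le W k 0 _ (by omega)]
  | app M N ihM ihN =>
      intro j k W V hjk
      simp only [subst]
      rw [ihM _ _ _ _ hjk, ihN _ _ _ _ hjk]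

end Term
namespace Term

/-! ### Counted steps -/

inductive Steps (r : Term → Term → Prop) : ℕ → Term → Term → Prop
  | refl (M : Term) : Steps r 0 M M
  | head {M N P : Term} {k : ℕ} : r M N → Steps r k N P → Steps r (k+1) M P

theorem steps_of_rtg {r : Term → Term → Prop} {M N : Term}
    (h : Relation.ReflTransGen r M N) : ∃ k, Steps r k M N := by
  induction h using Relation.ReflTransGen.head_induction_on with
  | refl => exact ⟨0, Steps.refl N⟩
  | head hstep _ ih => obtain ⟨k, hk⟩ := ih; exact ⟨k+1, Steps.head hstep hk⟩

theorem rtg_of_steps {r : Term → Term → Prop} {k : ℕ} {M N : Term}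
    (h : Steps r k M N) : Relation.ReflTransGen r M N := by
  induction h with
  | refl => exact Relation.ReflTransGen.refl
  | head hstep _ ih => exact Relation.ReflTransGen.head hstep ih

/-! ### Head reduction basics -/

theorem hb_source_app {M N : Term} (h : HeadBeta M N) : ∃ A B, M = app A B := by
  cases h with
  | beta B V Ms hV => exact appList_app_shape Ms _ _
  | right V Ms hV hr => exact appList_app_shape Ms _ _

theorem hs_source_app {M N : Term} (h : HeadSigma M N) : ∃ A B, M = app A B := by
  cases h with
  | sigma1 B N L Ms => exact appList_app_shape Ms _ _
  | sigma3 V L N Ms hV => exact appList_app_shape Ms _ _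
  | right V Ms hV hr => exact appList_app_shape Ms _ _

theorem hr_source_app {M N : Term} (h : HeadRed M N) : ∃ A B, M = app A B := by
  cases h with
  | inl h => exact hb_source_app h
  | inr h => exact hs_source_app h

theorem value_no_hr {V N : Term} (hV : isValue V) (h : HeadRed V N) : False := by
  obtain ⟨A, B, rfl⟩ := hr_source_app h; exact hV

theorem value_no_hb {V N : Term} (hV : isValue V) (h : HeadBeta V N) : False :=
  value_no_hr hV (Or.inl h)

/-- head β steps stay head β steps with one more argument. -/
theorem hb_appL {M M' : Term} (h : HeadBeta M M') (N : Term) :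
    HeadBeta (app M N) (app M' N) := by
  cases h with
  | beta B V Ms hV =>
      rw [appList_snoc, appList_snoc]
      exact HeadBeta.beta B V (Ms ++ [N]) hV
  | right V Ms hV hr =>
      rw [appList_snoc, appList_snoc]
      exact HeadBeta.right V (Ms ++ [N]) hV hr

theorem hs_appL {M M' : Term} (h : HeadSigma M M') (N : Term) :
    HeadSigma (app M N) (app M' N) := by
  cases h with
  | sigma1 B N0 L Ms =>
      rw [appList_snoc, appList_snoc]
      exact HeadSigma.sigma1 B N0 L (Ms ++ [N])
  | sigma3 V L N0 Ms hV =>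
      rw [appList_snoc, appList_snoc]
      exact HeadSigma.sigma3 V L N0 (Ms ++ [N]) hV
  | right V Ms hV hr =>
      rw [appList_snoc, appList_snoc]
      exact HeadSigma.right V (Ms ++ [N]) hV hr

theorem hr_appL {M M' : Term} (h : HeadRed M M') (N : Term) :
    HeadRed (app M N) (app M' N) := by
  cases h with
  | inl h => exact Or.inl (hb_appL h N)
  | inr h => exact Or.inr (hs_appL h N)

theorem rtg_hr_appL {M M' : Term} (h : Relation.ReflTransGen HeadRed M M') (N : Term) :
    Relation.ReflTransGen HeadRed (app M N) (app M' N) :=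
  Relation.ReflTransGen.lift (fun X => app X N) (fun _ _ hs => hr_appL hs N) _ _ h

theorem hr_arg {V W W' : Term} (hV : isValue V) (h : HeadRed W W') (Ms : List Term) :
    HeadRed (appList (app V W) Ms) (appList (app V W') Ms) := by
  cases h with
  | inl h => exact Or.inl (HeadBeta.right V Ms hV h)
  | inr h => exact Or.inr (HeadSigma.right V Ms hV h)

theorem rtg_hr_arg {V W W' : Term} (hV : isValue V)
    (h : Relation.ReflTransGen HeadRed W W') (Ms : List Term) :
    Relation.ReflTransGen HeadRed (appList (app V W) Ms) (appList (app V W') Ms) :=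
  Relation.ReflTransGen.lift (fun X => appList (app V X) Ms)
    (fun _ _ hs => hr_arg hV hs Ms) _ _ h

theorem rtg_hb_arg {V W W' : Term} (hV : isValue V)
    (h : Relation.ReflTransGen HeadBeta W W') (Ms : List Term) :
    Relation.ReflTransGen HeadBeta (appList (app V W) Ms) (appList (app V W') Ms) :=
  Relation.ReflTransGen.lift (fun X => appList (app V X) Ms)
    (fun _ _ hs => HeadBeta.right V Ms hV hs) _ _ h

/-! ### Inversion of head steps on spine-decomposed terms -/

theorem spine_inj {h h' W W' : Term} {Ms Ms' : List Term}
    (hv : isValue h) (hv' : isValue h')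
    (he : appList (app h W) Ms = appList (app h' W') Ms') :
    h = h' ∧ W = W' ∧ Ms = Ms' := by
  have h2 := appList_value_inj hv hv'
    (show appList h (W :: Ms) = appList h' (W' :: Ms') from he)
  obtain ⟨h3, h4⟩ := h2
  injection h4 with h5 h6
  exact ⟨h3, h5, h6⟩

theorem spine_inj3 {h W : Term} {Ms : List Term} {B N L : Term} {Ks : List Term}
    (hv : isValue h)
    (he : appList (app h W) Ms = appList (app (app (lam B) N) L) Ks) :
    h = lam B ∧ W = N ∧ Ms = L :: Ks := by
  have h2 := appList_value_inj hv (by trivial : isValue (lam B))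
    (show appList h (W :: Ms) = appList (lam B) (N :: L :: Ks) from he)
  obtain ⟨h3, h4⟩ := h2
  injection h4 with h5 h6
  exact ⟨h3, h5, h6⟩

theorem invHB {T U : Term} (h : HeadBeta T U) {V W : Term} {Ms : List Term}
    (hV : isValue V) (hT : T = appList (app V W) Ms) :
    (∃ B, V = lam B ∧ isValue W ∧ U = appList (subst B 0 W) Ms) ∨
    (∃ W', HeadBeta W W' ∧ U = appList (app V W') Ms) := by
  cases h with
  | beta B V0 Ks hV0 =>
      obtain ⟨h1, h2, h3⟩ := spine_inj (by trivial : isValue (lam B)) hV hT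
      subst h2; subst h3
      exact Or.inl ⟨B, h1.symm, hV0, rfl⟩
  | right V0 Ks hV0 hr =>
      obtain ⟨h1, h2, h3⟩ := spine_inj hV0 hV hT
      subst h1; subst h2; subst h3
      exact Or.inr ⟨_, hr, rfl⟩

theorem invHS {T U : Term} (h : HeadSigma T U) {V W : Term} {Ms : List Term}
    (hV : isValue V) (hT : T = appList (app V W) Ms) :
    (∃ B L rest, V = lam B ∧ Ms = L :: rest ∧
        U = appList (app (lam (app B (lift 0 L))) W) rest) ∨
    (∃ C D, W = app (lam C) D ∧
        U = appList (app (lam (app (lift 0 V) C)) D) Ms) ∨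
    (∃ W', HeadSigma W W' ∧ U = appList (app V W') Ms) := by
  cases h with
  | sigma1 B N0 L Ks =>
      obtain ⟨h1, h2, h3⟩ := spine_inj3 hV hT.symm
      subst h2
      exact Or.inl ⟨B, L, Ks, h1, h3, rfl⟩
  | sigma3 V0 L N Ks hV0 =>
      obtain ⟨h1, h2, h3⟩ := spine_inj hV0 hV hT
      subst h1; subst h3
      exact Or.inr (Or.inl ⟨L, N, h2.symm, rfl⟩)
  | right V0 Ks hV0 hr =>
      obtain ⟨h1, h2, h3⟩ := spine_inj hV0 hV hT
      subst h1; subst h2; subst h3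
      exact Or.inr (Or.inr ⟨_, hr, rfl⟩)

end Term
namespace Term

/-! ### Sized Takahashi-style parallel reduction -/

inductive PN : ℕ → Term → Term → Prop
  | var (x : ℕ) : PN 0 (var x) (var x)
  | lam {M M' : Term} {m : ℕ} : PN m M M' → PN 0 (lam M) (lam M')
  | app {M M' N N' : Term} {a b : ℕ} : PN a M M' → PN b N N' →
      PN (a+b+1) (app M N) (app M' N')
  | beta {B B' W W' : Term} {p q : ℕ} : isValue W → isValue W' →
      PN p B B' → PN q W W' →
      PN (p+q+2) (app (lam B) W) (subst B' 0 W')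
  | sigma1 {B B' N N' L L' : Term} {p q r : ℕ} : PN p B B' → PN q N N' → PN r L L' →
      PN (q+1) (app (app (lam B) N) L) (app (lam (app B' (lift 0 L'))) N')
  | sigma3 {V V' C C' N N' : Term} {p q r : ℕ} : isValue V → isValue V' →
      PN p V V' → PN q C C' → PN r N N' →
      PN (r+1) (app V (app (lam C) N)) (app (lam (app (lift 0 V') C')) N')

theorem pn_refl : ∀ M : Term, ∃ n, PN n M M := by
  intro M
  induction M with
  | var x => exact ⟨0, PN.var x⟩
  | lam M ih => obtain ⟨m, hm⟩ := ih; exact ⟨0, PN.lam hm⟩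
  | app M N ihM ihN =>
      obtain ⟨a, ha⟩ := ihM; obtain ⟨b, hb⟩ := ihN
      exact ⟨a+b+1, PN.app ha hb⟩

theorem pn_lift {n : ℕ} {M M' : Term} (h : PN n M M') :
    ∀ d, PN n (lift d M) (lift d M') := by
  induction h with
  | var x => intro d; simp only [lift]; split_ifs <;> exact PN.var _
  | lam hM ihM => intro d; exact PN.lam (ihM (d+1))
  | app hM hN ihM ihN => intro d; exact PN.app (ihM d) (ihN d)
  | @beta B B' W W' p q hW hW' hB hWp ihB ihW =>
      intro d
      simp only [lift]
      rw [lift_subst_ge B' 0 d W' (by omega)]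
      exact PN.beta (lift_isValue hW d) (lift_isValue hW' d) (ihB (d+1)) (ihW d)
  | @sigma1 B B' N N' L L' p q r hB hN hL ihB ihN ihL =>
      intro d
      simp only [lift]
      rw [show lift (d+1) (lift 0 L') = lift 0 (lift d L') from (lift_lift L' 0 d (by omega)).symm]
      exact PN.sigma1 (ihB (d+1)) (ihN d) (ihL d)
  | @sigma3 V V' C C' N N' p q r hV hV' hVp hC hN ihV ihC ihN =>
      intro d
      simp only [lift]
      rw [show lift (d+1) (lift 0 V') = lift 0 (lift d V') from (lift_lift V' 0 d (by omega)).symm]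
      exact PN.sigma3 (lift_isValue hV d) (lift_isValue hV' d) (ihV d) (ihC (d+1)) (ihN d)

theorem pn_value_inv {n : ℕ} {V V' : Term} (hV : isValue V) (h : PN n V V') :
    n = 0 ∧ isValue V' := by
  cases h with
  | var x => exact ⟨rfl, trivial⟩
  | lam hM => exact ⟨rfl, trivial⟩
  | app hM hN => exact hV.elim
  | beta h1 h2 h3 h4 => exact hV.elim
  | sigma1 h1 h2 h3 => exact hV.elim
  | sigma3 h1 h2 h3 h4 h5 => exact hV.elim

theorem pn_subst {n : ℕ} {M M' : Term} (h : PN n M M') :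
    ∀ k {V V' : Term}, isValue V → isValue V' → PN 0 V V' →
      ∃ m ≤ n, PN m (subst M k V) (subst M' k V') := by
  induction h with
  | var x =>
      intro k V V' hV hV' hVp
      simp only [subst]
      split_ifs
      · exact ⟨0, le_refl 0, hVp⟩
      · exact ⟨0, le_refl 0, PN.var _⟩
      · exact ⟨0, le_refl 0, PN.var _⟩
  | lam hM ihM =>
      intro k V V' hV hV' hVp
      obtain ⟨m', _, hm'⟩ := ihM (k+1) (lift_isValue hV 0) (lift_isValue hV' 0) (pn_lift hVp 0)
      exact ⟨0, le_refl 0, PN.lam hm'⟩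
  | app hM hN ihM ihN =>
      intro k V V' hV hV' hVp
      obtain ⟨a', ha', hA⟩ := ihM k hV hV' hVp
      obtain ⟨b', hb', hB⟩ := ihN k hV hV' hVp
      exact ⟨a'+b'+1, by omega, PN.app hA hB⟩
  | @beta B B' W W' p q hW hW' hB hWp ihB ihW =>
      intro k V V' hV hV' hVp
      obtain ⟨p', hp', hPB⟩ := ihB (k+1) (lift_isValue hV 0) (lift_isValue hV' 0) (pn_lift hVp 0)
      obtain ⟨q', hq', hPW⟩ := ihW k hV hV' hVp
      refine ⟨p'+q'+2, by omega, ?_⟩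
      simp only [subst]
      rw [subst_subst B' 0 k W' V' (by omega)]
      exact PN.beta (subst_isValue hW hV k) (subst_isValue hW' hV' k) hPB hPW
  | @sigma1 B B' N N' L L' p q r hB hN hL ihB ihN ihL =>
      intro k V V' hV hV' hVp
      obtain ⟨p', _, hPB⟩ := ihB (k+1) (lift_isValue hV 0) (lift_isValue hV' 0) (pn_lift hVp 0)
      obtain ⟨q', hq', hPN⟩ := ihN k hV hV' hVp
      obtain ⟨r', _, hPL⟩ := ihL k hV hV' hVp
      refine ⟨q'+1, by omega, ?_⟩
      simp only [subst]
      rw [show subst (lift 0 L') (k+1) (lift 0 V') = lift 0 (subst L' k V') from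
        (lift_subst_le L' k 0 V' (by omega)).symm]
      exact PN.sigma1 hPB hPN hPL
  | @sigma3 V0 V0' C C' N N' p q r hV0 hV0' hPV0 hC hN ihV0 ihC ihN =>
      intro k V V' hV hV' hVp
      obtain ⟨p', _, hPV⟩ := ihV0 k hV hV' hVp
      obtain ⟨q', _, hPC⟩ := ihC (k+1) (lift_isValue hV 0) (lift_isValue hV' 0) (pn_lift hVp 0)
      obtain ⟨r', hr', hPN⟩ := ihN k hV hV' hVp
      refine ⟨r'+1, by omega, ?_⟩
      simp only [subst]
      rw [show subst (lift 0 V0') (k+1) (lift 0 V') = lift 0 (subst V0' k V') from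
        (lift_subst_le V0' k 0 V' (by omega)).symm]
      exact PN.sigma3 (subst_isValue hV0 hV k) (subst_isValue hV0' hV' k) hPV hPC hPN

/-! ### Par-level closure lemmas -/

theorem par_absorb {M M' : Term} (h : Par M M') {Ns Ns' : List Term}
    (hNs : List.Forall₂ Par Ns Ns') : Par (appList M Ns) (appList M' Ns') := by
  cases h with
  | var x hMs =>
      rw [← appList_append, ← appList_append]
      exact Par.var x (List.rel_append hMs hNs)
  | lam hM hMs =>
      rw [← appList_append, ← appList_append]
      exact Par.lam hM (List.rel_append hMs hNs)
  | beta hW hW' hB hWp hMs =>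
      rw [← appList_append, ← appList_append]
      exact Par.beta hW hW' hB hWp (List.rel_append hMs hNs)
  | sigma1 hB hN hL hMs =>
      rw [← appList_append, ← appList_append]
      exact Par.sigma1 hB hN hL (List.rel_append hMs hNs)
  | sigma3 hV hV' hVp hL hN hMs =>
      rw [← appList_append, ← appList_append]
      exact Par.sigma3 hV hV' hVp hL hN (List.rel_append hMs hNs)

theorem par_app {M M' N N' : Term} (h : Par M M') (hN : Par N N') :
    Par (app M N) (app M' N') :=
  par_absorb h (List.Forall₂.cons hN List.Forall₂.nil)

theorem pn_to_par {n : ℕ} {M N : Term} (h : PN n M N) : Par M N := by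
  induction h with
  | var x => exact Par.var x List.Forall₂.nil
  | lam hM ihM => exact Par.lam ihM List.Forall₂.nil
  | app hM hN ihM ihN => exact par_app ihM ihN
  | beta hW hW' hB hWp ihB ihW => exact Par.beta hW hW' ihB ihW List.Forall₂.nil
  | sigma1 hB hN hL ihB ihN ihL => exact Par.sigma1 ihB ihN ihL List.Forall₂.nil
  | sigma3 hV hV' hVp hC hN ihV ihC ihN =>
      exact Par.sigma3 hV hV' ihV ihC ihN List.Forall₂.nil

theorem pn_appList {M M' : Term} (h : ∃ a, PN a M M') {Ms Ms' : List Term}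
    (hMs : List.Forall₂ (fun x y => ∃ c, PN c x y) Ms Ms') :
    ∃ n, PN n (appList M Ms) (appList M' Ms') := by
  induction hMs generalizing M M' with
  | nil => exact h
  | cons hxy htl ih =>
      obtain ⟨a, ha⟩ := h
      obtain ⟨c, hc⟩ := hxy
      exact ih ⟨a+c+1, PN.app ha hc⟩

/-! ### size and Par → PN -/

def size : Term → ℕ
  | var _ => 1
  | lam M => size M + 1
  | app M N => size M + size N + 1

theorem size_pos (M : Term) : 1 ≤ size M := by
  cases M <;> simp [size] <;> omega

theorem size_appList (M : Term) (Ms : List Term) :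
    size (appList M Ms) = size M + (Ms.map size).sum + Ms.length := by
  induction Ms generalizing M with
  | nil => simp [appList]
  | cons a tl ih =>
      simp only [appList, ih, size, List.map_cons, List.sum_cons, List.length_cons]
      omega

theorem size_mem_lt {x : Term} {Ms : List Term} (hx : x ∈ Ms) (h : Term) :
    size x < size (appList h Ms) := by
  rw [size_appList]
  have h1 : size x ≤ (Ms.map size).sum :=
    List.single_le_sum (fun y _ => Nat.zero_le y) _ (List.mem_map_of_mem (f := size) hx)
  have h2 := size_pos h
  have h3 : 1 ≤ Ms.length := List.length_pos_iff.mpr (by rintro rfl; simp at hx)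
  omega

theorem forall2_imp_mem {Ms Ms' : List Term} (h : List.Forall₂ Par Ms Ms')
    (H : ∀ x ∈ Ms, ∀ y, Par x y → ∃ c, PN c x y) :
    List.Forall₂ (fun x y => ∃ c, PN c x y) Ms Ms' := by
  induction h with
  | nil => exact List.Forall₂.nil
  | cons hxy htl ih =>
      exact List.Forall₂.cons (H _ (by simp) _ hxy)
        (ih (fun x hx y hy => H x (by simp [hx]) y hy))

theorem par_to_pn : ∀ M N : Term, Par M N → ∃ n, PN n M N := by
  have main : ∀ s, ∀ M N : Term, size M ≤ s → Par M N → ∃ n, PN n M N := by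
    intro s
    induction s using Nat.strong_induction_on with
    | _ s ihs =>
      intro M N hsize h
      cases h with
      | @var x Ms Ms' hMs =>
          refine pn_appList ⟨0, PN.var x⟩ (forall2_imp_mem hMs ?_)
          intro x hx y hy
          exact ihs (size x) (lt_of_lt_of_le (size_mem_lt hx _) hsize) x y (le_refl _) hy
      | @lam B B' Ms Ms' hB hMs =>
          have hsB : size B < size (appList (lam B) Ms) := by
            rw [size_appList]; simp only [size]; omega
          refine pn_appList ⟨0, PN.lam
            (ihs (size B) (lt_of_lt_of_le hsB hsize) B B' (le_refl _) hB).choose_spec⟩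
            (forall2_imp_mem hMs ?_)
          intro x hx y hy
          exact ihs (size x) (lt_of_lt_of_le (size_mem_lt hx _) hsize) x y (le_refl _) hy
      | @beta B B' W W' Ms Ms' hW hW' hB hWp hMs =>
          have hsB : size B < size (appList (app (lam B) W) Ms) ∧
              size W < size (appList (app (lam B) W) Ms) := by
            rw [size_appList]; simp only [size]; omega
          obtain ⟨nb, hnb⟩ := ihs (size B) (lt_of_lt_of_le hsB.1 hsize) B B' (le_refl _) hB
          obtain ⟨nw, hnw⟩ := ihs (size W) (lt_of_lt_of_le hsB.2 hsize) W W' (le_refl _) hWp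
          refine pn_appList ⟨_, PN.beta hW hW' hnb hnw⟩ (forall2_imp_mem hMs ?_)
          intro x hx y hy
          exact ihs (size x) (lt_of_lt_of_le (size_mem_lt hx _) hsize) x y (le_refl _) hy
      | @sigma1 B B' N0 N0' L L' Ms Ms' hB hN hL hMs =>
          have hsB : size B < size (appList (app (app (lam B) N0) L) Ms) ∧
              size N0 < size (appList (app (app (lam B) N0) L) Ms) ∧
              size L < size (appList (app (app (lam B) N0) L) Ms) := by
            rw [size_appList]; simp only [size]; omega
          obtain ⟨nb, hnb⟩ := ihs (size B) (lt_of_lt_of_le hsB.1 hsize) B B' (le_refl _) hB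
          obtain ⟨nn, hnn⟩ := ihs (size N0) (lt_of_lt_of_le hsB.2.1 hsize) N0 N0' (le_refl _) hN
          obtain ⟨nl, hnl⟩ := ihs (size L) (lt_of_lt_of_le hsB.2.2 hsize) L L' (le_refl _) hL
          refine pn_appList ⟨_, PN.sigma1 hnb hnn hnl⟩ (forall2_imp_mem hMs ?_)
          intro x hx y hy
          exact ihs (size x) (lt_of_lt_of_le (size_mem_lt hx _) hsize) x y (le_refl _) hy
      | @sigma3 V V' C C' N0 N0' Ms Ms' hV hV' hVp hC hN hMs =>
          have hsB : size V < size (appList (app V (app (lam C) N0)) Ms) ∧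
              size C < size (appList (app V (app (lam C) N0)) Ms) ∧
              size N0 < size (appList (app V (app (lam C) N0)) Ms) := by
            rw [size_appList]; simp only [size]; omega
          obtain ⟨nv, hnv⟩ := ihs (size V) (lt_of_lt_of_le hsB.1 hsize) V V' (le_refl _) hVp
          obtain ⟨nc, hnc⟩ := ihs (size C) (lt_of_lt_of_le hsB.2.1 hsize) C C' (le_refl _) hC
          obtain ⟨nn, hnn⟩ := ihs (size N0) (lt_of_lt_of_le hsB.2.2 hsize) N0 N0' (le_refl _) hN
          refine pn_appList ⟨_, PN.sigma3 hV hV' hnv hnc hnn⟩ (forall2_imp_mem hMs ?_)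
          intro x hx y hy
          exact ihs (size x) (lt_of_lt_of_le (size_mem_lt hx _) hsize) x y (le_refl _) hy
  exact fun M N h => main (size M) M N (le_refl _) h

theorem red_to_pn {M N : Term} (h : Red M N) : ∃ n, PN n M N := by
  induction h with
  | base hb =>
      cases hb with
      | beta B V hV =>
          obtain ⟨p, hp⟩ := pn_refl B
          obtain ⟨q, hq⟩ := pn_refl V
          exact ⟨p+q+2, PN.beta hV hV hp hq⟩
      | sigma1 B N L =>
          obtain ⟨p, hp⟩ := pn_refl B
          obtain ⟨q, hq⟩ := pn_refl N
          obtain ⟨r, hr⟩ := pn_refl L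
          exact ⟨q+1, PN.sigma1 hp hq hr⟩
      | sigma3 V L N hV =>
          obtain ⟨p, hp⟩ := pn_refl V
          obtain ⟨q, hq⟩ := pn_refl L
          obtain ⟨r, hr⟩ := pn_refl N
          exact ⟨r+1, PN.sigma3 hV hV hp hq hr⟩
  | lam hM ih => obtain ⟨m, hm⟩ := ih; exact ⟨0, PN.lam hm⟩
  | appL N hM ih =>
      obtain ⟨m, hm⟩ := ih
      obtain ⟨q, hq⟩ := pn_refl N
      exact ⟨m+q+1, PN.app hm hq⟩
  | appR M hN ih =>
      obtain ⟨m, hm⟩ := ih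
      obtain ⟨q, hq⟩ := pn_refl M
      exact ⟨q+m+1, PN.app hq hm⟩

theorem ipar_to_pn {M N : Term} (h : IPar M N) : ∃ n, PN n M N := by
  induction h with
  | lam hB => obtain ⟨m, hm⟩ := par_to_pn _ _ hB; exact ⟨0, PN.lam hm⟩
  | var x => exact ⟨0, PN.var x⟩
  | right hV hV' hVp hN hMs ihN =>
      obtain ⟨nv, hnv⟩ := par_to_pn _ _ hVp
      obtain ⟨nn, hnn⟩ := ihN
      exact pn_appList ⟨_, PN.app hnv hnn⟩
        (forall2_imp_mem hMs (fun x _ y hy => par_to_pn x y hy))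

theorem ipar_to_par {M N : Term} (h : IPar M N) : Par M N := by
  obtain ⟨n, hn⟩ := ipar_to_pn h
  exact pn_to_par hn

/-! ### PN → Red* -/

theorem rtg_red_lam {M M' : Term} (h : Relation.ReflTransGen Red M M') :
    Relation.ReflTransGen Red (lam M) (lam M') :=
  Relation.ReflTransGen.lift lam (fun _ _ hs => Ctx.lam hs) _ _ h

theorem rtg_red_appL {M M' : Term} (h : Relation.ReflTransGen Red M M') (N : Term) :
    Relation.ReflTransGen Red (app M N) (app M' N) :=
  Relation.ReflTransGen.lift (fun X => app X N) (fun _ _ hs => Ctx.appL N hs) _ _ h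

theorem rtg_red_appR (M : Term) {N N' : Term} (h : Relation.ReflTransGen Red N N') :
    Relation.ReflTransGen Red (app M N) (app M N') :=
  Relation.ReflTransGen.lift (fun X => app M X) (fun _ _ hs => Ctx.appR M hs) _ _ h

theorem pn_to_redstar {n : ℕ} {M N : Term} (h : PN n M N) :
    Relation.ReflTransGen Red M N := by
  induction h with
  | var x => exact Relation.ReflTransGen.refl
  | lam hM ihM => exact rtg_red_lam ihM
  | app hM hN ihM ihN =>
      exact Relation.ReflTransGen.trans (rtg_red_appL ihM _) (rtg_red_appR _ ihN)
  | @beta B B' W W' p q hW hW' hB hWp ihB ihW =>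
      refine Relation.ReflTransGen.trans (rtg_red_appL (rtg_red_lam ihB) W) ?_
      refine Relation.ReflTransGen.trans (rtg_red_appR _ ihW) ?_
      exact Relation.ReflTransGen.single (Ctx.base (VBase.beta B' W' hW'))
  | @sigma1 B B' N N' L L' p q r hB hN hL ihB ihN ihL =>
      refine Relation.ReflTransGen.trans
        (rtg_red_appL (Relation.ReflTransGen.trans
          (rtg_red_appL (rtg_red_lam ihB) _) (rtg_red_appR _ ihN)) _) ?_
      refine Relation.ReflTransGen.trans (rtg_red_appR _ ihL) ?_
      exact Relation.ReflTransGen.single (Ctx.base (VBase.sigma1 B' N' L'))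
  | @sigma3 V V' C C' N N' p q r hV hV' hVp hC hN ihV ihC ihN =>
      refine Relation.ReflTransGen.trans (rtg_red_appL ihV _) ?_
      refine Relation.ReflTransGen.trans
        (rtg_red_appR _ (Relation.ReflTransGen.trans
          (rtg_red_appL (rtg_red_lam ihC) _) (rtg_red_appR _ ihN))) ?_
      exact Relation.ReflTransGen.single (Ctx.base (VBase.sigma3 V' C' N' hV'))
  
end Term
namespace Term

/-! ### value inversions for Par / IPar -/

theorem par_value_inv {V X : Term} (hV : isValue V) (h : Par V X) :
    (∃ x, V = var x ∧ X = var x) ∨ (∃ B B', V = lam B ∧ X = lam B' ∧ Par B B') := by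
  cases h with
  | @var x Ms Ms' hMs =>
      cases hMs with
      | nil => exact Or.inl ⟨x, rfl, rfl⟩
      | cons hxy htl => exact (not_value_appList_app hV).elim
  | @lam B B' Ms Ms' hB hMs =>
      cases hMs with
      | nil => exact Or.inr ⟨B, B', rfl, rfl, hB⟩
      | cons hxy htl => exact (not_value_appList_app hV).elim
  | beta h1 h2 h3 h4 h5 => exact (not_value_appList_app hV).elim
  | sigma1 h1 h2 h3 h4 => exact (not_value_appList_app hV).elim
  | sigma3 h1 h2 h3 h4 h5 h6 => exact (not_value_appList_app hV).elim

theorem not_hr_lam {B T : Term} (h : HeadRed (lam B) T) : False := by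
  obtain ⟨A, C, hE⟩ := hr_source_app h
  exact Term.noConfusion hE

theorem not_hr_var {x : ℕ} {T : Term} (h : HeadRed (var x) T) : False := by
  obtain ⟨A, C, hE⟩ := hr_source_app h
  exact Term.noConfusion hE

theorem rtg_int_lam {B B' : Term} (h : Relation.ReflTransGen Red B B') :
    Relation.ReflTransGen IntRed (lam B) (lam B') :=
  Relation.ReflTransGen.lift lam
    (fun _ _ hs => ⟨Ctx.lam hs, fun hh => not_hr_lam hh⟩) _ _ h

/-- internal parallel step into a value -/
theorem ipar_value_inv {L V : Term} (h : IPar L V) (hV : isValue V) :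
    Relation.ReflTransGen IntRed L V ∧ isValue L := by
  cases h with
  | lam hPar =>
      obtain ⟨n, hn⟩ := par_to_pn _ _ hPar
      exact ⟨rtg_int_lam (pn_to_redstar hn), trivial⟩
  | var x => exact ⟨Relation.ReflTransGen.refl, trivial⟩
  | right h1 h2 h3 h4 h5 => exact (not_value_appList_app hV).elim

theorem ipar_inv_app_lam {W T : Term} (h : IPar W T) {C' D' : Term}
    (hT : T = app (lam C') D') :
    ∃ C D, W = app (lam C) D ∧ Par C C' ∧ IPar D D' := by
  cases h with
  | lam hPar => exact Term.noConfusion hT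
  | var x => exact Term.noConfusion hT
  | @right V V' N N' Ms Ms' hV hV' hp hN hMs =>
      obtain ⟨h1, h2, h3⟩ := spine_inj hV' (by trivial : isValue (lam C'))
        (show appList (app V' N') Ms' = appList (app (lam C') D') [] from hT)
      subst h1; subst h2; subst h3
      cases hMs with
      | nil =>
          rcases par_value_inv hV hp with ⟨x, rfl, hx⟩ | ⟨B, B', rfl, hB', hBB⟩
          · exact Term.noConfusion hx
          · injection hB' with hBC
            subst hBC
            exact ⟨B, N, rfl, hBB, hN⟩

theorem forall2_pn_of_par {Ms Ms' : List Term} (h : List.Forall₂ Par Ms Ms') :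
    List.Forall₂ (fun x y => ∃ c, PN c x y) Ms Ms' :=
  forall2_imp_mem h (fun x _ y hy => par_to_pn x y hy)

/-! ### L1: splitting a parallel step into head steps followed by an internal one -/

theorem pn_split : ∀ n, ∀ M N : Term, PN n M N →
    ∃ L, Relation.ReflTransGen HeadRed M L ∧ IPar L N := by
  intro n
  induction n using Nat.strong_induction_on with
  | _ n ihn =>
    intro M N h
    cases h with
    | var x => exact ⟨var x, Relation.ReflTransGen.refl, IPar.var x⟩
    | lam hB => exact ⟨_, Relation.ReflTransGen.refl, IPar.lam (pn_to_par hB)⟩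
    | @app A A' B B' a b hA hB =>
        obtain ⟨L1, hL1, hI1⟩ := ihn a (by omega) A A' hA
        cases hI1 with
        | var x =>
            obtain ⟨L2, hL2, hI2⟩ := ihn b (by omega) B B' hB
            refine ⟨app (var x) L2, ?_, ?_⟩
            · exact Relation.ReflTransGen.trans (rtg_hr_appL hL1 B)
                (rtg_hr_arg (by trivial) hL2 [])
            · exact IPar.right (by trivial) (by trivial)
                (Par.var x List.Forall₂.nil) hI2 List.Forall₂.nil
        | @lam B0 B0' hPar =>
            obtain ⟨L2, hL2, hI2⟩ := ihn b (by omega) B B' hB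
            refine ⟨app (lam B0) L2, ?_, ?_⟩
            · exact Relation.ReflTransGen.trans (rtg_hr_appL hL1 B)
                (rtg_hr_arg (by trivial) hL2 [])
            · exact IPar.right (by trivial) (by trivial)
                (Par.lam hPar List.Forall₂.nil) hI2 List.Forall₂.nil
        | @right V V' W W' Ks Ks' hV hV' hp hW hKs =>
            refine ⟨app (appList (app V W) Ks) B, rtg_hr_appL hL1 B, ?_⟩
            rw [appList_snoc, appList_snoc]
            exact IPar.right hV hV' hp hW
              (List.rel_append hKs (List.Forall₂.cons (pn_to_par hB) List.Forall₂.nil))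
    | @beta B B' W W' p q hWv hWv' hB hW =>
        have h0 := pn_value_inv hWv hW
        obtain ⟨m, hm, hsub⟩ := pn_subst hB 0 hWv hWv' (h0.1 ▸ hW)
        obtain ⟨L, hL, hI⟩ := ihn m (by omega) _ _ hsub
        exact ⟨L, Relation.ReflTransGen.head
          (Or.inl (HeadBeta.beta B W [] hWv)) hL, hI⟩
    | @sigma1 B B' N0 N0' L L' p q r hB hN hL =>
        obtain ⟨L2, hL2, hI2⟩ := ihn q (by omega) _ _ hN
        refine ⟨app (lam (app B (lift 0 L))) L2, ?_, ?_⟩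
        · exact Relation.ReflTransGen.head (Or.inr (HeadSigma.sigma1 B N0 L []))
            (rtg_hr_arg (by trivial) hL2 [])
        · exact IPar.right (by trivial) (by trivial)
            (Par.lam (par_app (pn_to_par hB) (pn_to_par (pn_lift hL 0))) List.Forall₂.nil)
            hI2 List.Forall₂.nil
    | @sigma3 U U' C C' N0 N0' p q r hU hU' hPU hC hN =>
        obtain ⟨L2, hL2, hI2⟩ := ihn r (by omega) _ _ hN
        refine ⟨app (lam (app (lift 0 U) C)) L2, ?_, ?_⟩
        · exact Relation.ReflTransGen.head (Or.inr (HeadSigma.sigma3 U C N0 [] hU))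
            (rtg_hr_arg (by trivial) hL2 [])
        · exact IPar.right (by trivial) (by trivial)
            (Par.lam (par_app (pn_to_par (pn_lift hPU 0)) (pn_to_par hC)) List.Forall₂.nil)
            hI2 List.Forall₂.nil

/-! ### L2: commuting an internal parallel step with a head step -/

theorem ipar_hr_commute {M N : Term} (h : IPar M N) :
    ∀ P, HeadRed N P →
      ∃ Q, Relation.ReflTransGen HeadRed M Q ∧ ∃ n, PN n Q P := by
  induction h with
  | lam hPar => exact fun P hP => (not_hr_lam hP).elim
  | var x => exact fun P hP => (not_hr_var hP).elim
  | @right V V' W W' Ms Ms' hV hV' hp hW hMs ihW =>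
      intro P hP
      cases hP with
      | inl hb =>
          rcases invHB hb hV' rfl with ⟨B', hVeq, hWval, hPeq⟩ | ⟨W'', hstep, hPeq⟩
          · -- head β step in N
            subst hPeq
            rcases par_value_inv hV hp with ⟨x, rfl, hx⟩ | ⟨B, B0', rfl, hB0, hBB⟩
            · rw [hVeq] at hx; exact Term.noConfusion hx
            · rw [hVeq] at hB0
              injection hB0 with hB0'; subst hB0'
              obtain ⟨hWint, hWvalW⟩ := ipar_value_inv hW hWval
              obtain ⟨nb, hnb⟩ := par_to_pn _ _ hBB
              obtain ⟨nw, hnw⟩ := par_to_pn _ _ (ipar_to_par hW)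
              have hnw0 : PN 0 W W' := (pn_value_inv hWvalW hnw).1 ▸ hnw
              obtain ⟨m, _, hsub⟩ := pn_subst hnb 0 hWvalW hWval hnw0
              refine ⟨appList (subst B 0 W) Ms,
                Relation.ReflTransGen.single (Or.inl (HeadBeta.beta B W Ms hWvalW)), ?_⟩
              exact pn_appList ⟨m, hsub⟩ (forall2_pn_of_par hMs)
          · -- head step inside the first argument
            subst hPeq
            obtain ⟨Q0, hQ0, n0, hPN0⟩ := ihW _ (Or.inl hstep)
            obtain ⟨nv, hnv⟩ := par_to_pn _ _ hp
            refine ⟨appList (app V Q0) Ms, rtg_hr_arg hV hQ0 Ms, ?_⟩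
            exact pn_appList ⟨nv + n0 + 1, PN.app hnv hPN0⟩ (forall2_pn_of_par hMs)
      | inr hs =>
          rcases invHS hs hV' rfl with ⟨B', L', rest', hVeq, hMseq, hPeq⟩ |
            ⟨C', D', hWeq, hPeq⟩ | ⟨W'', hstep, hPeq⟩
          · -- σ1
            subst hPeq
            rcases par_value_inv hV hp with ⟨x, rfl, hx⟩ | ⟨B, B0', rfl, hB0, hBB⟩
            · rw [hVeq] at hx; exact Term.noConfusion hx
            · rw [hVeq] at hB0
              injection hB0 with hB0'; subst hB0'
              subst hMseq
              cases hMs with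
              | cons hLL htl =>
                rename_i L rest
                refine ⟨appList (app (lam (app B (lift 0 L))) W) rest,
                  Relation.ReflTransGen.single (Or.inr (HeadSigma.sigma1 B W L rest)), ?_⟩
                obtain ⟨nb, hnb⟩ := par_to_pn _ _ hBB
                obtain ⟨nl, hnl⟩ := par_to_pn _ _ hLL
                obtain ⟨nw, hnw⟩ := ipar_to_pn hW
                exact pn_appList ⟨_, PN.app (PN.lam (PN.app hnb (pn_lift hnl 0))) hnw⟩
                  (forall2_pn_of_par htl)
          · -- σ3
            subst hPeq
            obtain ⟨C, D, rfl, hCC, hDD⟩ := ipar_inv_app_lam hW hWeq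
            refine ⟨appList (app (lam (app (lift 0 V) C)) D) Ms,
              Relation.ReflTransGen.single (Or.inr (HeadSigma.sigma3 V C D Ms hV)), ?_⟩
            obtain ⟨nv, hnv⟩ := par_to_pn _ _ hp
            obtain ⟨nc, hnc⟩ := par_to_pn _ _ hCC
            obtain ⟨nd, hnd⟩ := ipar_to_pn hDD
            exact pn_appList ⟨_, PN.app (PN.lam (PN.app (pn_lift hnv 0) hnc)) hnd⟩
              (forall2_pn_of_par hMs)
          · -- head σ step inside the first argument
            subst hPeq
            obtain ⟨Q0, hQ0, n0, hPN0⟩ := ihW _ (Or.inr hstep)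
            obtain ⟨nv, hnv⟩ := par_to_pn _ _ hp
            refine ⟨appList (app V Q0) Ms, rtg_hr_arg hV hQ0 Ms, ?_⟩
            exact pn_appList ⟨nv + n0 + 1, PN.app hnv hPN0⟩ (forall2_pn_of_par hMs)

/-! ### gluing: internal parallel before a head sequence to a value -/

theorem lemmaF : ∀ k, ∀ N V : Term, Steps HeadRed k N V → isValue V →
    ∀ L, IPar L N →
      ∃ V2, isValue V2 ∧ Relation.ReflTransGen HeadRed L V2 ∧
        Relation.ReflTransGen IntRed V2 V := by
  intro k
  induction k using Nat.strong_induction_on with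
  | _ k ihk =>
    intro N V hsteps hV L hL
    cases hsteps with
    | refl =>
        obtain ⟨hint, hvalL⟩ := ipar_value_inv hL hV
        exact ⟨L, hvalL, Relation.ReflTransGen.refl, hint⟩
    | @head _ N1 _ k' hstep hrest =>
        obtain ⟨Q, hQ, n, hPN⟩ := ipar_hr_commute hL _ hstep
        obtain ⟨L1, hL1, hI1⟩ := pn_split n Q N1 hPN
        obtain ⟨V2, hV2v, hV2r, hV2i⟩ := ihk k' (by omega) N1 V hrest hV L1 hI1
        exact ⟨V2, hV2v, Relation.ReflTransGen.trans
          (Relation.ReflTransGen.trans hQ hL1) hV2r, hV2i⟩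

/-! ### sequentialization -/

theorem red_star_to_hr : ∀ M V : Term, isValue V → Relation.ReflTransGen Red M V →
    ∃ V2, isValue V2 ∧ Relation.ReflTransGen HeadRed M V2 ∧
      Relation.ReflTransGen IntRed V2 V := by
  intro M V hV h
  induction h using Relation.ReflTransGen.head_induction_on with
  | refl => exact ⟨V, hV, Relation.ReflTransGen.refl, Relation.ReflTransGen.refl⟩
  | head hstep hrest ih =>
      obtain ⟨V2, hV2v, hV2hr, hV2int⟩ := ih
      obtain ⟨n0, hPN0⟩ := red_to_pn hstep
      obtain ⟨L, hLr, hLi⟩ := pn_split n0 _ _ hPN0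
      obtain ⟨k, hk⟩ := steps_of_rtg hV2hr
      obtain ⟨V3, hV3v, hV3r, hV3i⟩ := lemmaF k _ V2 hk hV2v L hLi
      exact ⟨V3, hV3v, Relation.ReflTransGen.trans hLr hV3r,
        Relation.ReflTransGen.trans hV3i hV2int⟩

/-! ### eliminating head σ steps -/

theorem evalArg : ∀ k, ∀ Z N0 : Term, ∀ Ms : List Term, ∀ V : Term,
    Steps HeadBeta k (appList (app (lam Z) N0) Ms) V → isValue V →
    ∃ W, isValue W ∧ Relation.ReflTransGen HeadBeta N0 W ∧
      Relation.ReflTransGen HeadBeta (appList (subst Z 0 W) Ms) V := by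
  intro k
  induction k using Nat.strong_induction_on with
  | _ k ihk =>
    intro Z N0 Ms V hsteps hV
    cases hsteps with
    | refl => exact (not_value_appList_app hV).elim
    | @head _ N1 _ k' hstep hrest =>
        rcases invHB hstep (by trivial : isValue (lam Z)) rfl with
          ⟨B, hEq, hN0v, hN1eq⟩ | ⟨N0', hstep', hN1eq⟩
        · injection hEq with hZB
          subst hZB; subst hN1eq
          exact ⟨N0, hN0v, Relation.ReflTransGen.refl, rtg_of_steps hrest⟩
        · subst hN1eq
          obtain ⟨W, hWv, hWr, hWrest⟩ := ihk k' (by omega) Z N0' Ms V hrest hV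
          exact ⟨W, hWv, Relation.ReflTransGen.head hstep' hWr, hWrest⟩

theorem var_stuck : ∀ k, ∀ (x : ℕ) (W : Term) (Ms : List Term) (V : Term),
    Steps HeadBeta k (appList (app (var x) W) Ms) V → isValue V → False := by
  intro k
  induction k using Nat.strong_induction_on with
  | _ k ihk =>
    intro x W Ms V hsteps hV
    cases hsteps with
    | refl => exact not_value_appList_app hV
    | @head _ N1 _ k' hstep hrest =>
        rcases invHB hstep (by trivial : isValue (var x)) rfl with
          ⟨B, hEq, hN0v, hN1eq⟩ | ⟨W', hstep', hN1eq⟩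
        · exact Term.noConfusion hEq
        · subst hN1eq
          exact ihk k' (by omega) x W' Ms V hrest hV

theorem hs_then_hb {M N : Term} (h : HeadSigma M N) :
    ∀ V, isValue V → Relation.ReflTransGen HeadBeta N V →
      Relation.ReflTransGen HeadBeta M V := by
  induction h with
  | @sigma1 B N0 L Ms =>
      intro V hV hNV
      obtain ⟨k, hk⟩ := steps_of_rtg hNV
      obtain ⟨W, hWv, hWr, hrest⟩ := evalArg k _ _ _ _ hk hV
      rw [show subst (app B (lift 0 L)) 0 W = app (subst B 0 W) L by
        simp only [subst]; rw [subst_lift_self]] at hrest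
      refine Relation.ReflTransGen.trans
        (rtg_hb_arg (by trivial : isValue (lam B)) hWr (L::Ms)) ?_
      exact Relation.ReflTransGen.head (HeadBeta.beta B W (L::Ms) hWv) hrest
  | @sigma3 U C N0 Ms hU =>
      intro V hV hNV
      obtain ⟨k, hk⟩ := steps_of_rtg hNV
      obtain ⟨W, hWv, hWr, hrest⟩ := evalArg k _ _ _ _ hk hV
      rw [show subst (app (lift 0 U) C) 0 W = app U (subst C 0 W) by
        simp only [subst]; rw [subst_lift_self]] at hrest
      have inner : Relation.ReflTransGen HeadBeta (app (lam C) N0) (subst C 0 W) := by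
        refine Relation.ReflTransGen.trans
          (rtg_hb_arg (by trivial : isValue (lam C)) hWr []) ?_
        exact Relation.ReflTransGen.single (HeadBeta.beta C W [] hWv)
      exact Relation.ReflTransGen.trans (rtg_hb_arg hU inner Ms) hrest
  | @right U X X' Ms hU hXX' ih =>
      intro V hV hNV
      rcases value_cases hU with ⟨x, rfl⟩ | ⟨Z, rfl⟩
      · exact ((steps_of_rtg hNV).elim (fun k hk => (var_stuck k x X' Ms V hk hV).elim))
      · obtain ⟨k, hk⟩ := steps_of_rtg hNV
        obtain ⟨W, hWv, hWr, hrest⟩ := evalArg k Z X' Ms V hk hV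
        have hXW := ih W hWv hWr
        refine Relation.ReflTransGen.trans (rtg_hb_arg (by trivial) hXW Ms) ?_
        exact Relation.ReflTransGen.head (HeadBeta.beta Z W Ms hWv) hrest

theorem hr_star_to_hb {M V : Term} (hV : isValue V)
    (h : Relation.ReflTransGen HeadRed M V) : Relation.ReflTransGen HeadBeta M V := by
  induction h using Relation.ReflTransGen.head_induction_on with
  | refl => exact Relation.ReflTransGen.refl
  | head hstep hrest ih =>
      cases hstep with
      | inl hb => exact Relation.ReflTransGen.head hb ih
      | inr hs => exact hs_then_hb hs V hV ih

end Term

open Term Relation in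
theorem reduction_to_value :
    (∀ M V : Term, isValue V → ReflTransGen Red M V →
      ∃ V2, isValue V2 ∧ ReflTransGen HeadBeta M V2 ∧ ReflTransGen IntRed V2 V) ∧
    (∀ M V : Term, isValue V →
      (ReflTransGen HeadBeta M V ↔ ReflTransGen HeadRed M V)) := by
  constructor
  · intro M V hV hred
    obtain ⟨V2, h1, h2, h3⟩ := red_star_to_hr M V hV hred
    exact ⟨V2, h1, hr_star_to_hb h1 h2, h3⟩
  · intro M V hV
    constructor
    · intro h
      exact Relation.ReflTransGen.mono (fun _ _ hb => Or.inl hb) _ _ h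
    · exact hr_star_to_hb hV
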